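/- Fix n, h, k and 1 ≤ i ≤ n. The number of independent k-subsets of P_n^(h) containing the vertex i equals Σ_{r=0}^{k-1} p̄(i-h-1, r) · p̄(n-i-h, k-1-r), where p̄(m, j) denotes the number of independent j-subsets of P_m^(h) when m ≥ 0, and p̄(m, j) = p̄(0, j) (which is 1 if j = 0 and 0 otherwise) when m < 0. -/

import Mathlib

open Finset

/-- The independent subsets of the h-th power of the path on vertices {1,...,n}:
subsets of {1,...,n} in which any two distinct elements differ by more than h. -/
def Indep (n h : ℕ) : Finset (Finset ℕ) :=
  (Finset.Icc 1 n).powerset.filter (fun S => ∀ a ∈ S, ∀ b ∈ S, a < b → h < b - a)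

/-- The independent k-subsets. -/
def IndepK (n h k : ℕ) : Finset (Finset ℕ) :=
  (Indep n h).filter (fun S => S.card = k)

lemma mem_IndepK {n h k : ℕ} {S : Finset ℕ} :
    S ∈ IndepK n h k ↔ S ⊆ Finset.Icc 1 n ∧
      (∀ a ∈ S, ∀ b ∈ S, a < b → h < b - a) ∧ S.card = k := by
  simp [IndepK, Indep, and_assoc]

theorem stmt8 (n h k i : ℕ) (hi1 : 1 ≤ i) (hin : i ≤ n) :
    ((IndepK n h k).filter (fun S => i ∈ S)).card =
      ∑ r ∈ Finset.range k,
        (IndepK (i - h - 1) h r).card * (IndepK (n - i - h) h (k - 1 - r)).card := by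
  classical
  have key : ∑ r ∈ Finset.range k,
      (IndepK (i - h - 1) h r).card * (IndepK (n - i - h) h (k - 1 - r)).card
      = ((Finset.range k).sigma fun r =>
          (IndepK (i - h - 1) h r) ×ˢ (IndepK (n - i - h) h (k - 1 - r))).card := by
    rw [Finset.card_sigma]
    simp [Finset.card_product]
  rw [key]
  apply Finset.card_nbij'
    (i := fun S => ⟨(S.filter (· < i)).card,
      (S.filter (· < i), (S.filter (fun x => i < x)).image (fun x => x - (i + h)))⟩)
    (j := fun p => p.2.1 ∪ insert i (p.2.2.image (fun x => x + (i + h))))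
  · -- forward membership
    intro S hS
    rw [Finset.mem_coe, Finset.mem_filter, mem_IndepK] at hS
    obtain ⟨⟨hsub, hind, hcard⟩, hiS⟩ := hS
    set L := S.filter (· < i) with hL
    set R := S.filter (fun x => i < x) with hR
    -- cardinality split
    have hsplit : L.card + (1 + R.card) = k := by
      have h1 : L.card + (S.filter (fun x => ¬ x < i)).card = k := by
        rw [hL, Finset.card_filter_add_card_filter_not, hcard]
      have h2 : S.filter (fun x => ¬ x < i) = insert i R := by
        ext x
        simp only [Finset.mem_filter, Finset.mem_insert, hR]
        constructor
        · rintro ⟨hx, hx2⟩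
          rcases eq_or_lt_of_le (not_lt.mp hx2) with h | h
          · exact Or.inl h.symm
          · exact Or.inr ⟨hx, h⟩
        · rintro (rfl | ⟨hx, hx2⟩)
          · exact ⟨hiS, by omega⟩
          · exact ⟨hx, by omega⟩
      have h3 : i ∉ R := by simp [hR]
      rw [h2, Finset.card_insert_of_notMem h3] at h1
      omega
    have hLbound : ∀ a ∈ L, 1 ≤ a ∧ a ≤ i - h - 1 := by
      intro a ha
      rw [hL, Finset.mem_filter] at ha
      have h1 := Finset.mem_Icc.mp (hsub ha.1)
      have h2 := hind a ha.1 i hiS ha.2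
      omega
    have hRbound : ∀ b ∈ R, i + h + 1 ≤ b ∧ b ≤ n := by
      intro b hb
      rw [hR, Finset.mem_filter] at hb
      have h1 := Finset.mem_Icc.mp (hsub hb.1)
      have h2 := hind i hiS b hb.1 hb.2
      omega
    simp only [Finset.mem_coe, Finset.mem_sigma, Finset.mem_range, Finset.mem_product]
    have hLc : (S.filter (fun x => x < i)).card = L.card := rfl
    refine ⟨by omega, ?_, ?_⟩
    · rw [mem_IndepK]
      refine ⟨?_, ?_, rfl⟩
      · intro a ha
        rw [Finset.mem_Icc]
        exact hLbound a ha
      · intro a ha b hb hab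
        exact hind a (Finset.mem_filter.mp ha).1 b (Finset.mem_filter.mp hb).1 hab
    · rw [mem_IndepK]
      have hinj : Set.InjOn (fun x => x - (i + h)) R := by
        intro x hx y hy hxy
        have h1 := hRbound x hx
        have h2 := hRbound y hy
        simp only at hxy
        omega
      refine ⟨?_, ?_, ?_⟩
      · intro x hx
        simp only [Finset.mem_image] at hx
        obtain ⟨b, hb, rfl⟩ := hx
        have := hRbound b hb
        rw [Finset.mem_Icc]
        omega
      · intro x hx y hy hxy
        simp only [Finset.mem_image] at hx hy
        obtain ⟨b1, hb1, rfl⟩ := hx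
        obtain ⟨b2, hb2, rfl⟩ := hy
        have h1 := hRbound b1 hb1
        have h2 := hRbound b2 hb2
        have hb12 : b1 < b2 := by omega
        have := hind b1 (Finset.mem_filter.mp hb1).1 b2 (Finset.mem_filter.mp hb2).1 hb12
        omega
      · rw [Finset.card_image_of_injOn hinj]
        omega
  · -- backward membership
    rintro ⟨r, A, B⟩ hp
    simp only [Finset.mem_coe, Finset.mem_sigma, Finset.mem_range, Finset.mem_product, mem_IndepK] at hp
    obtain ⟨hr, ⟨hAsub, hAind, hAcard⟩, ⟨hBsub, hBind, hBcard⟩⟩ := hp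
    have hAbound : ∀ a ∈ A, 1 ≤ a ∧ a ≤ i - h - 1 := fun a ha =>
      Finset.mem_Icc.mp (hAsub ha)
    have hBbound : ∀ b ∈ B, 1 ≤ b ∧ b ≤ n - i - h := fun b hb =>
      Finset.mem_Icc.mp (hBsub hb)
    rw [Finset.mem_coe, Finset.mem_filter, mem_IndepK]
    have hmem : ∀ x, x ∈ A ∪ insert i (B.image (fun x => x + (i + h))) ↔
        x ∈ A ∨ x = i ∨ ∃ b ∈ B, x = b + (i + h) := by
      intro x
      simp only [Finset.mem_union, Finset.mem_insert, Finset.mem_image]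
      constructor
      · rintro (h | h | ⟨b, hb, rfl⟩)
        · exact Or.inl h
        · exact Or.inr (Or.inl h)
        · exact Or.inr (Or.inr ⟨b, hb, rfl⟩)
      · rintro (h | h | ⟨b, hb, rfl⟩)
        · exact Or.inl h
        · exact Or.inr (Or.inl h)
        · exact Or.inr (Or.inr ⟨b, hb, rfl⟩)
    refine ⟨⟨?_, ?_, ?_⟩, ?_⟩
    · intro x hx
      rw [hmem] at hx
      rw [Finset.mem_Icc]
      rcases hx with h | h | ⟨b, hb, rfl⟩
      · have := hAbound x h; omega
      · omega
      · have := hBbound b hb; omega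
    · intro x hx y hy hxy
      rw [hmem] at hx hy
      rcases hx with hx | hx | ⟨b1, hb1, rfl⟩ <;>
        rcases hy with hy | hy | ⟨b2, hb2, rfl⟩
      · exact hAind x hx y hy hxy
      · have := hAbound x hx; omega
      · have := hAbound x hx; have := hBbound b2 hb2; omega
      · have := hAbound y hy; omega
      · omega
      · have := hBbound b2 hb2; omega
      · have := hAbound y hy; have := hBbound b1 hb1; omega
      · have := hBbound b1 hb1; omega
      · have h1 := hBbound b1 hb1
        have h2 := hBbound b2 hb2
        have hb12 : b1 < b2 := by omega
        have := hBind b1 hb1 b2 hb2 hb12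
        omega
    · have hdisj1 : Disjoint A (insert i (B.image (fun x => x + (i + h)))) := by
        rw [Finset.disjoint_left]
        intro x hx hx2
        have h1 := hAbound x hx
        simp only [Finset.mem_insert, Finset.mem_image] at hx2
        rcases hx2 with rfl | ⟨b, hb, rfl⟩
        · omega
        · have := hBbound b hb; omega
      have hnotmem : i ∉ B.image (fun x => x + (i + h)) := by
        simp only [Finset.mem_image]
        rintro ⟨b, hb, hbe⟩
        have := hBbound b hb
        omega
      have hinj : Set.InjOn (fun x => x + (i + h)) B := by
        intro x _ y _ hxy
        simp only at hxy
        omega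
      rw [Finset.card_union_of_disjoint hdisj1, Finset.card_insert_of_notMem hnotmem,
        Finset.card_image_of_injOn hinj, hAcard, hBcard]
      omega
    · rw [hmem]; exact Or.inr (Or.inl rfl)
  · -- left inverse
    intro S hS
    rw [Finset.mem_coe, Finset.mem_filter, mem_IndepK] at hS
    obtain ⟨⟨hsub, hind, hcard⟩, hiS⟩ := hS
    dsimp only
    have himg : ((S.filter (fun x => i < x)).image (fun x => x - (i + h))).image
        (fun x => x + (i + h)) = S.filter (fun x => i < x) := by
      ext x
      simp only [Finset.mem_image, Finset.mem_filter]
      constructor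
      · rintro ⟨y, ⟨b, ⟨hbS, hbi⟩, rfl⟩, rfl⟩
        have h2 := hind i hiS b hbS hbi
        have hb : b - (i + h) + (i + h) = b := by omega
        rw [hb]
        exact ⟨hbS, hbi⟩
      · intro ⟨hxS, hxi⟩
        have h2 := hind i hiS x hxS hxi
        exact ⟨x - (i + h), ⟨x, ⟨hxS, hxi⟩, rfl⟩, by omega⟩
    rw [himg]
    ext x
    simp only [Finset.mem_union, Finset.mem_insert, Finset.mem_filter]
    constructor
    · rintro (⟨hx, _⟩ | rfl | ⟨hx, _⟩)
      · exact hx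
      · exact hiS
      · exact hx
    · intro hx
      rcases lt_trichotomy x i with hlt | rfl | hlt
      · exact Or.inl ⟨hx, hlt⟩
      · exact Or.inr (Or.inl rfl)
      · exact Or.inr (Or.inr ⟨hx, hlt⟩)
  · -- right inverse
    rintro ⟨r, A, B⟩ hp
    simp only [Finset.mem_coe, Finset.mem_sigma, Finset.mem_range, Finset.mem_product, mem_IndepK] at hp
    obtain ⟨hr, ⟨hAsub, hAind, hAcard⟩, ⟨hBsub, hBind, hBcard⟩⟩ := hp
    have hAbound : ∀ a ∈ A, 1 ≤ a ∧ a ≤ i - h - 1 := fun a ha =>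
      Finset.mem_Icc.mp (hAsub ha)
    have hBbound : ∀ b ∈ B, 1 ≤ b ∧ b ≤ n - i - h := fun b hb =>
      Finset.mem_Icc.mp (hBsub hb)
    dsimp only
    have hfa : (A ∪ insert i (B.image (fun x => x + (i + h)))).filter (· < i) = A := by
      ext x
      simp only [Finset.mem_filter, Finset.mem_union, Finset.mem_insert, Finset.mem_image]
      constructor
      · rintro ⟨(hx | rfl | ⟨b, hb, rfl⟩), hlt⟩
        · exact hx
        · exact absurd hlt (lt_irrefl _)
        · have := hBbound b hb
          exact absurd hlt (by omega)
      · intro hx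
        have := hAbound x hx
        exact ⟨Or.inl hx, by omega⟩
    have hfb : (A ∪ insert i (B.image (fun x => x + (i + h)))).filter (fun x => i < x)
        = B.image (fun x => x + (i + h)) := by
      ext x
      simp only [Finset.mem_filter, Finset.mem_union, Finset.mem_insert, Finset.mem_image]
      constructor
      · rintro ⟨(hx | rfl | ⟨b, hb, rfl⟩), hlt⟩
        · have := hAbound x hx
          exact absurd hlt (by omega)
        · exact absurd hlt (lt_irrefl _)
        · exact ⟨b, hb, rfl⟩
      · rintro ⟨b, hb, rfl⟩
        have := hBbound b hb
        exact ⟨Or.inr (Or.inr ⟨b, hb, rfl⟩), by omega⟩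
    rw [hfa, hfb]
    have hBB : ((B.image (fun x => x + (i + h))).image (fun x => x - (i + h))) = B := by
      ext x
      simp only [Finset.mem_image]
      constructor
      · rintro ⟨y, ⟨b, hb, rfl⟩, rfl⟩
        have hb2 : b + (i + h) - (i + h) = b := by omega
        rw [hb2]
        exact hb
      · intro hx
        exact ⟨x + (i + h), ⟨x, hx, rfl⟩, by omega⟩
    rw [hBB, hAcard]
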